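/- For all real x with 0 < x < 1, (arcsin x / x)^2 + (arctan x / x) < 2 + ((π² + π − 8)/π) · x³ · arctan x. -/

import Mathlib

open Real Set

set_option maxHeartbeats 2000000

private lemma monoHelper {f f' : ℝ → ℝ} {a b : ℝ}
    (hc : ContinuousOn f (Icc a b))
    (hd : ∀ t ∈ Ioo a b, HasDerivAt f (f' t) t)
    (h0 : ∀ t ∈ Ioo a b, 0 ≤ f' t) : MonotoneOn f (Icc a b) := by
  apply monotoneOn_of_deriv_nonneg (convex_Icc a b) hc
  · intro t ht
    rw [interior_Icc] at ht
    exact (hd t ht).differentiableAt.differentiableWithinAt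
  · intro t ht
    rw [interior_Icc] at ht
    rw [(hd t ht).deriv]
    exact h0 t ht

private lemma arcsin_ub_sqrt {x : ℝ} (h0 : -1 ≤ x) (h1 : x ≤ 1) :
    arcsin x ≤ π/2 - Real.sqrt (2*(1-x)) := by
  have hθ := Real.arccos_nonneg x
  have hcos : Real.cos (Real.arccos x) = x := Real.cos_arccos h0 h1
  have h2 : 1 - (Real.arccos x)^2/2 ≤ x := by
    calc 1 - (Real.arccos x)^2/2 ≤ Real.cos (Real.arccos x) := Real.one_sub_sq_div_two_le_cos
    _ = x := hcos
  have h3 : Real.sqrt (2*(1-x)) ≤ Real.arccos x := by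
    have : Real.sqrt (2*(1-x)) ≤ Real.sqrt ((Real.arccos x)^2) :=
      Real.sqrt_le_sqrt (by nlinarith)
    rwa [Real.sqrt_sq hθ] at this
  have := Real.arccos_eq_pi_div_two_sub_arcsin x
  linarith

private lemma arctan_lb {x : ℝ} (h0 : 0 ≤ x) (h1 : x ≤ 1) :
    π/4 - (1-x)/(1+x) ≤ arctan x := by
  set G : ℝ → ℝ := fun t => arctan t + (1-t)/(1+t) with hG
  have key : MonotoneOn (fun t => -G t) (Icc 0 1) := by
    apply monoHelper (f' := fun t => -(1/(1+t^2) - 2/(1+t)^2))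
    · apply ContinuousOn.neg
      apply (Real.continuous_arctan.continuousOn).add
      exact ContinuousOn.div (by fun_prop) (by fun_prop) (fun t ht => by
        simp only [mem_Icc] at ht; nlinarith [ht.1])
    · intro t ht
      simp only [mem_Ioo] at ht
      have h1t : (1:ℝ) + t ≠ 0 := by nlinarith [ht.1]
      have hd1 : HasDerivAt (fun t : ℝ => (1-t)/(1+t)) ((-1*(1+t) - (1-t)*1)/(1+t)^2) t := by
        exact HasDerivAt.div (by simpa using (hasDerivAt_id t).const_sub 1)
          (by simpa using (hasDerivAt_id t).const_add 1) h1t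
      have := ((Real.hasDerivAt_arctan t).add hd1).neg
      exact this.congr_deriv (by ring)
    · intro t ht
      simp only [mem_Ioo] at ht
      have h1t : (0:ℝ) < 1 + t := by linarith [ht.1]
      rw [neg_nonneg, sub_nonpos, div_le_div_iff₀ (by positivity) (by positivity)]
      nlinarith [sq_nonneg (t-1)]
  have := key (mem_Icc.2 ⟨h0, h1⟩) (mem_Icc.2 ⟨by norm_num, le_refl 1⟩) h1
  simp only [hG] at this
  have h14 : arctan (1:ℝ) = π/4 := Real.arctan_one
  norm_num at this
  linarith

private lemma arctan_ub2 {x : ℝ} (h0 : 0 ≤ x) (h1 : x ≤ 1) :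
    arctan x ≤ x - x^3/3 + x^5/5 := by
  set F : ℝ → ℝ := fun t => t - t^3/3 + t^5/5 - arctan t with hF
  have key : MonotoneOn F (Icc 0 1) := by
    apply monoHelper (f' := fun t => 1 - t^2 + t^4 - 1/(1+t^2))
    · exact ((by fun_prop : Continuous fun t : ℝ => t - t^3/3 + t^5/5).sub
        Real.continuous_arctan).continuousOn
    · intro t ht
      have : HasDerivAt (fun t : ℝ => t - t^3/3 + t^5/5)
          (1 - (3*t^2)/3 + (5*t^4)/5) t := by
        exact (((hasDerivAt_id t).sub ((hasDerivAt_pow 3 t).div_const 3)).add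
          ((hasDerivAt_pow 5 t).div_const 5))
      have := this.sub (Real.hasDerivAt_arctan t)
      exact this.congr_deriv (by ring)
    · intro t ht
      simp only [mem_Ioo] at ht
      rw [sub_nonneg, div_le_iff₀ (by positivity)]
      nlinarith [pow_nonneg ht.1.le 6]
  have h2 := key (mem_Icc.2 ⟨le_refl 0, by norm_num⟩) (mem_Icc.2 ⟨h0, h1⟩) h0
  simp only [hF] at h2
  norm_num at h2
  linarith

private lemma arcsin_ub_poly {x : ℝ} (h0 : 0 ≤ x) (h1 : x ≤ 7/10) :
    arcsin x ≤ x + x^3/6 + (13/100)*x^5 := by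
  set F : ℝ → ℝ := fun t => t + t^3/6 + (13/100)*t^5 - arcsin t with hF
  have key : MonotoneOn F (Icc 0 (7/10)) := by
    apply monoHelper (f' := fun t => 1 + t^2/2 + (13/20)*t^4 - 1/Real.sqrt (1-t^2))
    · apply ContinuousOn.sub (by fun_prop)
      exact Real.continuous_arcsin.continuousOn
    · intro t ht
      simp only [mem_Ioo] at ht
      have hne1 : t ≠ -1 := by intro h; rw [h] at ht; norm_num at ht
      have hne2 : t ≠ 1 := by intro h; rw [h] at ht; norm_num at ht
      have hp : HasDerivAt (fun t : ℝ => t + t^3/6 + (13/100)*t^5)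
          (1 + (3*t^2)/6 + (13/100)*(5*t^4)) t :=
        ((hasDerivAt_id t).add ((hasDerivAt_pow 3 t).div_const 6)).add
          ((hasDerivAt_pow 5 t).const_mul (13/100))
      have := hp.sub (Real.hasDerivAt_arcsin hne1 hne2)
      exact this.congr_deriv (by ring)
    · intro t ht
      simp only [mem_Ioo] at ht
      have ht2 : (0:ℝ) < 1 - t^2 := by nlinarith [ht.1, ht.2]
      have hu0 : 0 < Real.sqrt (1-t^2) := Real.sqrt_pos.2 ht2
      have hu2 : (Real.sqrt (1-t^2))^2 = 1 - t^2 := Real.sq_sqrt ht2.le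
      rw [sub_nonneg, div_le_iff₀ hu0]
      set u := Real.sqrt (1-t^2)
      have hP : (0:ℝ) < 1 + t^2/2 + (13/20)*t^4 := by positivity
      have hsq : 1 ≤ ((1 + t^2/2 + (13/20)*t^4) * u)^2 := by
        have expand : ((1 + t^2/2 + (13/20)*t^4) * u)^2
            = (1 + t^2/2 + (13/20)*t^4)^2 * (1 - t^2) := by
          rw [mul_pow, hu2]
        rw [expand]
        have h49 : t^2 ≤ 49/100 := by nlinarith [ht.1, ht.2]
        nlinarith [mul_nonneg (sub_nonneg.2 h49) (pow_nonneg ht.1.le 4),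
          mul_nonneg (sub_nonneg.2 h49) (pow_nonneg ht.1.le 6),
          mul_nonneg (sub_nonneg.2 h49) (pow_nonneg ht.1.le 8),
          pow_nonneg ht.1.le 10, pow_nonneg ht.1.le 4]
      nlinarith [mul_pos hP hu0, hsq]
  have h2 := key (mem_Icc.2 ⟨le_refl 0, by norm_num⟩) (mem_Icc.2 ⟨h0, h1⟩) h0
  simp only [hF] at h2
  norm_num at h2
  linarith

private lemma caseB_num {s : ℝ} (hs0 : 0 < s) (hs46 : 46/100 ≤ s) (hs77 : s ≤ 7746/10000) :
    (0:ℝ) < 15/100 + 9.8695*s - 19.857*s^2 + 18.37*s^4 - 14.822*s^6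
        + 10.02*s^8 - 5.792*s^10 + 2.62*s^12 - 0.8353*s^14 - 0.0196*s^18 := by
  have hqs : 0 ≤ (s - 46/100)*(7746/10000 - s) :=
    mul_nonneg (by linarith) (by linarith)
  nlinarith [hqs, hs46, hs77, mul_nonneg hqs (pow_nonneg hs0.le 2),
    mul_nonneg hqs (pow_nonneg hs0.le 4), mul_nonneg hqs (pow_nonneg hs0.le 6),
    mul_nonneg hqs (pow_nonneg hs0.le 8), mul_nonneg hqs (pow_nonneg hs0.le 10),
    mul_nonneg hqs (pow_nonneg hs0.le 12), mul_nonneg hqs (pow_nonneg hs0.le 14),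
    mul_nonneg hqs (pow_nonneg hs0.le 16), sq_nonneg (s - 77/100), sq_nonneg (s-6/10)]

private lemma caseB_main {s : ℝ} (hs0 : 0 < s) (hs46 : 46/100 ≤ s) (hs77 : s ≤ 7746/10000)
    (hπl : 3.141592 < π) (hπu : π < 3.141593)
    (hp2l : (9.8695:ℝ) < π^2) (hp2u : π^2 < 9.8697)
    (hp3l : (31.006:ℝ) < π^3) (hp3u : π^3 < 31.007) :
    0 < 2*π*(1 - s^2/2)^2
      + ((π^2+π-8)*(1 - s^2/2)^4 - π)*((1 - s^2/2)*((1 - s^2/2) - (1 - s^2/2)^3/3 + (1 - s^2/2)^5/5))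
      - π*(π/2 - s)^2 := by
  have hnum := caseB_num hs0 hs46 hs77
  have hF2B : (0:ℝ) <
      -104/15 + 2*π + (13/15)*π^2 - (1/4)*π^3 + π^2*s
      + (64/3 - (71/15)*π - (8/3)*π^2)*s^2
      + (-88/3 + (11/3)*π + (11/3)*π^2)*s^4
      + (76/3 - (17/6)*π - (19/6)*π^2)*s^6
      + (-101/6 + (31/16)*π + (101/48)*π^2)*s^8
      + (283/30 - (137/120)*π - (283/240)*π^2)*s^10
      + (-101/24 + (251/480)*π + (101/192)*π^2)*s^12
      + (4/3 - (1/6)*π - (1/6)*π^2)*s^14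
      + (-13/48 + (13/384)*π + (13/384)*π^2)*s^16
      + (1/32 - (1/256)*π - (1/256)*π^2)*s^18
      + (-1/640 + (1/5120)*π + (1/5120)*π^2)*s^20 := by
    nlinarith [hnum,
      mul_nonneg (by nlinarith : (0:ℝ) ≤ π^2 - 9.8695) hs0.le,
      mul_nonneg (by nlinarith : (0:ℝ) ≤ (64/3 - (71/15)*π - (8/3)*π^2) + 19.857) (pow_nonneg hs0.le 2),
      mul_nonneg (by nlinarith : (0:ℝ) ≤ (-88/3 + (11/3)*π + (11/3)*π^2) - 18.37) (pow_nonneg hs0.le 4),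
      mul_nonneg (by nlinarith : (0:ℝ) ≤ (76/3 - (17/6)*π - (19/6)*π^2) + 14.822) (pow_nonneg hs0.le 6),
      mul_nonneg (by nlinarith : (0:ℝ) ≤ (-101/6 + (31/16)*π + (101/48)*π^2) - 10.02) (pow_nonneg hs0.le 8),
      mul_nonneg (by nlinarith : (0:ℝ) ≤ (283/30 - (137/120)*π - (283/240)*π^2) + 5.792) (pow_nonneg hs0.le 10),
      mul_nonneg (by nlinarith : (0:ℝ) ≤ (-101/24 + (251/480)*π + (101/192)*π^2) - 2.62) (pow_nonneg hs0.le 12),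
      mul_nonneg (by nlinarith : (0:ℝ) ≤ (4/3 - (1/6)*π - (1/6)*π^2) + 0.8353) (pow_nonneg hs0.le 14),
      mul_nonneg (by nlinarith : (0:ℝ) ≤ -13/48 + (13/384)*π + (13/384)*π^2) (pow_nonneg hs0.le 16),
      mul_nonneg (by nlinarith : (0:ℝ) ≤ (1/32 - (1/256)*π - (1/256)*π^2) + 0.0196) (pow_nonneg hs0.le 18),
      mul_nonneg (by nlinarith : (0:ℝ) ≤ -1/640 + (1/5120)*π + (1/5120)*π^2) (pow_nonneg hs0.le 20),
      (by nlinarith : (0:ℝ) < -104/15 + 2*π + (13/15)*π^2 - (1/4)*π^3 - 149/1000)]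
  nlinarith [hF2B]

private lemma caseA_num {s : ℝ} (hs0 : 0 < s) (hs49 : s ≤ 49/100) :
    (0:ℝ) < 39.478 - 74*s - 9.8697*s^2 + 74*s^3 - 43.62*s^5 - 3.3*s^9 := by
  nlinarith [hs0.le, hs49, mul_nonneg (mul_nonneg hs0.le hs0.le) hs0.le,
    mul_nonneg (sub_nonneg.2 hs49) (pow_nonneg hs0.le 3),
    mul_nonneg (sub_nonneg.2 hs49) (pow_nonneg hs0.le 5),
    mul_nonneg (sub_nonneg.2 hs49) (pow_nonneg hs0.le 9),
    sq_nonneg s, sq_nonneg (s - 49/100)]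

private lemma caseA_main {s : ℝ} (hs0 : 0 < s) (hs49 : s ≤ 49/100)
    (hπl : 3.141592 < π) (hπu : π < 3.141593)
    (hp2l : (9.8695:ℝ) < π^2) (hp2u : π^2 < 9.8697)
    (hp3l : (31.006:ℝ) < π^3) (hp3u : π^3 < 31.007) :
    (0:ℝ) < 4*π^2 + (8 + 8*π - 3*π^2 - (5/2)*π^3)*s - π^2*s^2
        + (-20 - 18*π + (11/2)*π^2 + (25/8)*π^3)*s^3
        + (20 + 12*π - (35/8)*π^2 - (15/8)*π^3)*s^5
        + (-10 - (15/4)*π + (15/8)*π^2 + (5/8)*π^3)*s^7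
        + (5/2 + (9/16)*π - (27/64)*π^2 - (7/64)*π^3)*s^9
        + (-1/4 - (1/32)*π + (5/128)*π^2 + (1/128)*π^3)*s^11 := by
  have hnumA := caseA_num hs0 hs49
  nlinarith [hnumA,
    mul_nonneg (by nlinarith : (0:ℝ) ≤ (8 + 8*π - 3*π^2 - (5/2)*π^3) + 74) hs0.le,
    mul_nonneg (by nlinarith : (0:ℝ) ≤ 9.8697 - π^2) (pow_nonneg hs0.le 2),
    mul_nonneg (by nlinarith : (0:ℝ) ≤ (-20 - 18*π + (11/2)*π^2 + (25/8)*π^3) - 74) (pow_nonneg hs0.le 3),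
    mul_nonneg (by nlinarith : (0:ℝ) ≤ (20 + 12*π - (35/8)*π^2 - (15/8)*π^3) + 43.62) (pow_nonneg hs0.le 5),
    mul_nonneg (by nlinarith : (0:ℝ) ≤ -10 - (15/4)*π + (15/8)*π^2 + (5/8)*π^3) (pow_nonneg hs0.le 7),
    mul_nonneg (by nlinarith : (0:ℝ) ≤ (5/2 + (9/16)*π - (27/64)*π^2 - (7/64)*π^3) + 3.3) (pow_nonneg hs0.le 9),
    mul_nonneg (by nlinarith : (0:ℝ) ≤ -1/4 - (1/32)*π + (5/128)*π^2 + (1/128)*π^3) (pow_nonneg hs0.le 11),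
    (by nlinarith : (39.478:ℝ) ≤ 4*π^2)]

private lemma region1_main {x : ℝ} (h1 : 0 < x) (hx7 : x ≤ 7/10)
    (hπl : 3.141592 < π) (hπu : π < 3.141593)
    (hp2l : (9.8695:ℝ) < π^2) (hp2u : π^2 < 9.8697) :
    π*(x + x^3/6 + (13/100)*x^5)^2
      < 2*π*x^2 + ((π^2+π-8)*x^4 - π)*(x*(x - x^3/3 + x^5/5)) := by
  have h49 : x^2 ≤ 49/100 := by nlinarith
  have hc10 : (0:ℝ) ≤ (π^2/5 + π/5 - 8/5 - (169/10000)*π) := by nlinarith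
  have hfac : 0 < ((π^2+π-8) - (1/5+1/36+13/50)*π)
      - (((π^2+π-8) + (13/100)*π)/3)*x^2
      + ((π^2+π-8)/5 - (169/10000)*π)*x^4 := by
    have hql : (5.0110:ℝ) < π^2+π-8 := by nlinarith
    have hqu : π^2+π-8 < 5.0112 := by nlinarith
    nlinarith [h49, mul_nonneg hc10 (sq_nonneg (x*x)),
      mul_nonneg (by linarith : (0:ℝ) ≤ 5.0112 - (π^2+π-8)) (sq_nonneg x),
      mul_nonneg (by linarith : (0:ℝ) ≤ 3.141593 - π) (sq_nonneg x)]
  nlinarith [mul_pos (pow_pos h1 6) hfac]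

theorem stmt0 (x : ℝ) (h1 : 0 < x) (h2 : x < 1) :
    (arcsin x / x)^2 + arctan x / x < 2 + ((π^2 + π - 8)/π) * x^3 * arctan x := by
  have hπl : 3.141592 < π := Real.pi_gt_d6
  have hπu : π < 3.141593 := Real.pi_lt_d6
  have hπ0 : (0:ℝ) < π := Real.pi_pos
  have hp2l : (9.8695:ℝ) < π^2 := by nlinarith
  have hp2u : π^2 < 9.8697 := by nlinarith
  have hp3l : (31.006:ℝ) < π^3 := by nlinarith
  have hp3u : π^3 < 31.007 := by nlinarith
  have hA0 : 0 ≤ arcsin x := Real.arcsin_nonneg.2 h1.le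
  have key : π * (arcsin x)^2 < 2*π*x^2 + ((π^2+π-8)*x^4 - π) * (x * arctan x) := by
    rcases le_or_gt x (7/10) with hx7 | hx7
    · -- Region 1 : 0 < x ≤ 7/10, series bounds
      have hAub := arcsin_ub_poly h1.le hx7
      have hTub := arctan_ub2 h1.le h2.le
      have h49 : x^2 ≤ 49/100 := by nlinarith
      have hK : (π^2+π-8)*x^4 - π < 0 := by
        nlinarith [pow_le_pow_left₀ h1.le hx7 4, pow_nonneg h1.le 4]
      have hA2 : π * (arcsin x)^2 ≤ π * (x + x^3/6 + (13/100)*x^5)^2 := by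
        apply mul_le_mul_of_nonneg_left _ hπ0.le
        nlinarith [hAub, hA0]
      have hcoef : ((π^2+π-8)*x^4 - π) * (x*(x - x^3/3 + x^5/5))
          ≤ ((π^2+π-8)*x^4 - π) * (x * arctan x) := by
        apply mul_le_mul_of_nonpos_left _ hK.le
        nlinarith [hTub, h1]
      have hpoly := region1_main h1 hx7 hπl hπu hp2l hp2u
      linarith
    · -- Region 2 : 7/10 < x < 1, sqrt bound for arcsin
      set s := Real.sqrt (2*(1-x)) with hsdef
      have hs0 : 0 < s := Real.sqrt_pos.2 (by linarith)
      have hs2 : s^2 = 2*(1-x) := Real.sq_sqrt (by linarith)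
      have hAub : arcsin x ≤ π/2 - s := arcsin_ub_sqrt (by linarith) h2.le
      have hs6 : s^2 ≤ 3/5 := by rw [hs2]; linarith
      have hsπ : 0 ≤ π/2 - s := by nlinarith [hs0, hs6]
      have hA2 : π * (arcsin x)^2 ≤ π * (π/2 - s)^2 := by
        apply mul_le_mul_of_nonneg_left _ hπ0.le
        nlinarith [hA0, hAub, hsπ]
      have hxeq : x = 1 - s^2/2 := by linarith [hs2]
      have h4s : (0:ℝ) < 4 - s^2 := by linarith
      rcases le_or_gt ((π^2+π-8)*x^4) π with hKB | hKA
      · -- Case B : coefficient ≤ 0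
        have hTub := arctan_ub2 h1.le h2.le
        have hx89 : x ≤ 89/100 := by
          by_contra hc
          push_neg at hc
          have h4 : (89/100:ℝ)^4 ≤ x^4 := pow_le_pow_left₀ (by norm_num) hc.le 4
          nlinarith [h4, hp2l, hπu,
            mul_nonneg (by nlinarith : (0:ℝ) ≤ π^2+π-8-5.011)
              (by nlinarith [h4] : (0:ℝ) ≤ x^4 - (89/100)^4)]
        have hs46 : 46/100 ≤ s := by nlinarith [hs2, hs0]
        have hs77 : s ≤ 7746/10000 := by nlinarith [hs0, hs6]
        have hcoef : ((π^2+π-8)*x^4 - π) * (x*(x - x^3/3 + x^5/5))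
            ≤ ((π^2+π-8)*x^4 - π) * (x * arctan x) := by
          apply mul_le_mul_of_nonpos_left _ (by linarith)
          nlinarith [hTub, h1]
        have hkey : π*(π/2 - s)^2
            < 2*π*x^2 + ((π^2+π-8)*x^4 - π)*(x*(x - x^3/3 + x^5/5)) := by
          rw [hxeq, ← sub_pos]
          exact caseB_main hs0 hs46 hs77 hπl hπu hp2l hp2u hp3l hp3u
        linarith
      · -- Case A : coefficient > 0
        have hTlb := arctan_lb (by linarith) h2.le
        have h1x : (1:ℝ) + x ≠ 0 := by positivity
        have hyeq : (1-x)/(1+x) = s^2/(4-s^2) := by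
          rw [div_eq_div_iff h1x h4s.ne']
          nlinarith [hs2]
        have hx88 : 88/100 ≤ x := by
          by_contra hc
          push_neg at hc
          have h4 : x^4 ≤ (88/100:ℝ)^4 := pow_le_pow_left₀ h1.le hc.le 4
          nlinarith [h4, hp2u, hπl,
            mul_nonneg (by nlinarith : (0:ℝ) ≤ 5.0112 - (π^2+π-8)) (pow_nonneg h1.le 4)]
        have hs49 : s ≤ 49/100 := by nlinarith [hs0, hs2]
        have hcoef : ((π^2+π-8)*x^4 - π) * (x*(π/4 - (1-x)/(1+x)))
            ≤ ((π^2+π-8)*x^4 - π) * (x * arctan x) := by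
          apply mul_le_mul_of_nonneg_left _ (by linarith)
          nlinarith [hTlb, h1]
        have hGA := caseA_main hs0 hs49 hπl hπu hp2l hp2u hp3l hp3u
        have hkey : π*(π/2 - s)^2
            < 2*π*x^2 + ((π^2+π-8)*x^4 - π)*(x*(π/4 - (1-x)/(1+x))) := by
          rw [hyeq, hxeq, ← sub_pos]
          have hid : 2*π*(1 - s^2/2)^2
              + ((π^2+π-8)*(1 - s^2/2)^4 - π)*((1 - s^2/2)*(π/4 - s^2/(4-s^2)))
              - π*(π/2 - s)^2
              = s * (4*π^2 + (8 + 8*π - 3*π^2 - (5/2)*π^3)*s - π^2*s^2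
              + (-20 - 18*π + (11/2)*π^2 + (25/8)*π^3)*s^3
              + (20 + 12*π - (35/8)*π^2 - (15/8)*π^3)*s^5
              + (-10 - (15/4)*π + (15/8)*π^2 + (5/8)*π^3)*s^7
              + (5/2 + (9/16)*π - (27/64)*π^2 - (7/64)*π^3)*s^9
              + (-1/4 - (1/32)*π + (5/128)*π^2 + (1/128)*π^3)*s^11) / (4-s^2) := by
            field_simp
            ring
          rw [hid]
          exact div_pos (mul_pos hs0 hGA) h4s
        linarith
  have hx2 : (0:ℝ) < π * x^2 := by positivity
  have e1 : (arcsin x / x)^2 + arctan x / x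
      = (π*(arcsin x)^2 + π*(x*arctan x))/(π*x^2) := by
    field_simp
  have e2 : 2 + ((π^2 + π - 8)/π) * x^3 * arctan x
      = (2*π*x^2 + (π^2+π-8)*x^5*arctan x)/(π*x^2) := by
    field_simp
  rw [e1, e2, div_lt_div_iff₀ hx2 hx2]
  nlinarith [key, hx2]
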